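/- Under Rayleigh fading (all P_{νj} exponential with rate μ_{νj}, mutually independent, and independent of the uniform slot variables S_1,...,S_n on {1,...,m}), the full-duplex success probability satisfies E[X_{ij}] = Pr(P_{ij}/(N + Σ_{ν≠i,j} δ_{S_i S_ν} P_{νj}) ≥ θ) = e^{-μ_{ij} θ N} · Π_{ν≠i,j} (1 - (1/m) · θ/(θ + μ_{νj}/μ_{ij})). -/

import Mathlib

open MeasureTheory ProbabilityTheory Real
open scoped ENNReal

section Helpers

lemma expMeasure_apply' {r : ℝ} {s : Set ℝ} (hs : MeasurableSet s) :
    expMeasure r s = ∫⁻ x in s, exponentialPDF r x := by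
  rw [expMeasure, gammaMeasure, withDensity_apply _ hs]; rfl

lemma expMeasure_ae_nonneg {r : ℝ} : ∀ᵐ x ∂(expMeasure r), 0 ≤ x := by
  rw [ae_iff]
  have : {x : ℝ | ¬ 0 ≤ x} = Set.Iio 0 := by ext x; simp [Set.mem_Iio, not_le]
  rw [this, expMeasure_apply' measurableSet_Iio]
  exact lintegral_exponentialPDF_of_nonpos le_rfl

lemma expMeasure_survival {r : ℝ} (hr : 0 < r) {x : ℝ} (hx : 0 ≤ x) :
    expMeasure r {p | x ≤ p} = ENNReal.ofReal (Real.exp (-(r * x))) := by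
  haveI := isProbabilityMeasure_expMeasure hr
  have hset : {p : ℝ | x ≤ p} = Set.Ici x := rfl
  have hcompl : Set.Ici x = (Set.Iio x)ᶜ := by simp
  have hIio : expMeasure r (Set.Iio x) = ENNReal.ofReal (1 - Real.exp (-(r * x))) := by
    have h1 : expMeasure r (Set.Iic x) = ENNReal.ofReal (1 - Real.exp (-(r * x))) := by
      rw [expMeasure_apply' measurableSet_Iic, lintegral_exponentialPDF_eq_antiDeriv hr, if_pos hx]
    have h2 : expMeasure r {x} = 0 := by
      rw [expMeasure_apply' (measurableSet_singleton x)]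
      exact setLIntegral_measure_zero _ _ (measure_singleton x)
    have h3 : expMeasure r (Set.Iic x) = expMeasure r (Set.Iio x) + expMeasure r {x} := by
      rw [← measure_union (by simp) (measurableSet_singleton x)]
      congr 1
      ext y; simp [le_iff_lt_or_eq]
    rw [h3, h2, add_zero] at h1; exact h1
  have hle : Real.exp (-(r * x)) ≤ 1 :=
    Real.exp_le_one_iff.mpr (neg_nonpos_of_nonneg (by positivity))
  rw [hset, hcompl, measure_compl measurableSet_Iio (measure_ne_top _ _), measure_univ, hIio]
  rw [← ENNReal.ofReal_one, ← ENNReal.ofReal_sub _ (by linarith)]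
  congr 1; ring

lemma expMeasure_laplace {r a : ℝ} (hr : 0 < r) (ha : 0 ≤ a) :
    ∫⁻ p, ENNReal.ofReal (Real.exp (-(a * p))) ∂(expMeasure r)
      = ENNReal.ofReal (r / (r + a)) := by
  have hra : 0 < r + a := by linarith
  have hmeas : Measurable (gammaPDF 1 r) := (measurable_gammaPDFReal 1 r).ennreal_ofReal
  rw [expMeasure, gammaMeasure, lintegral_withDensity_eq_lintegral_mul _ hmeas (by fun_prop)]
  have hpt : ∀ p : ℝ, (gammaPDF 1 r p) * ENNReal.ofReal (Real.exp (-(a * p)))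
      = ENNReal.ofReal (r / (r + a)) * exponentialPDF (r + a) p := by
    intro p
    have h0 : gammaPDF 1 r p = exponentialPDF r p := rfl
    rw [h0, exponentialPDF_eq, exponentialPDF_eq]
    by_cases hp : 0 ≤ p
    · rw [if_pos hp, if_pos hp, ← ENNReal.ofReal_mul (by positivity),
        ← ENNReal.ofReal_mul (by positivity)]
      congr 1
      have hexp : Real.exp (-(a * p)) * Real.exp (-(r * p)) = Real.exp (-((r + a) * p)) := by
        rw [← Real.exp_add]; ring_nf
      have h2 : r / (r + a) * ((r + a) * Real.exp (-((r + a) * p)))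
          = r * Real.exp (-((r + a) * p)) := by
        field_simp
      rw [h2, ← hexp]; ring
    · simp [if_neg hp]
  simp only [Pi.mul_apply, hpt]
  have hm2 : Measurable (exponentialPDF (r + a)) :=
    (measurable_gammaPDFReal 1 (r + a)).ennreal_ofReal
  rw [lintegral_const_mul _ hm2]
  rw [lintegral_exponentialPDF_eq_one hra, mul_one]

end Helpers

lemma step_integral (m : ℕ) (hm : 1 ≤ m) (θ li l0 Qr : ℝ)
    (hθ : 0 < θ) (hli : 0 < li) (hl0 : 0 < l0) (hQr : 0 ≤ Qr) (c : Fin m → ℝ) :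
    ∫⁻ p0, (∑ s0 : Fin m, ENNReal.ofReal
        ((∑ b : Fin m, Real.exp (-(li * (c b + if b = s0 then θ * p0 else 0))) / m) * Qr)
        * (1 / (m : ℝ≥0∞))) ∂(expMeasure l0)
      = ENNReal.ofReal ((∑ b : Fin m, Real.exp (-(li * c b)) / m) *
          ((1 - (1 / (m:ℝ)) * (θ * li / (l0 + θ * li))) * Qr)) := by
  classical
  haveI := isProbabilityMeasure_expMeasure hl0
  have hm0 : (0:ℝ) < m := by exact_mod_cast hm
  have hl0' : 0 < l0 + θ * li := by positivity
  set R : ℝ≥0∞ := ENNReal.ofReal (l0 / (l0 + θ * li)) with hRdef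
  set W : ℝ → ℝ≥0∞ := fun p0 => ENNReal.ofReal (Real.exp (-(θ * li * p0))) with hWdef
  have hWmeas : Measurable W := by
    apply Measurable.ennreal_ofReal; fun_prop
  have hWint : ∫⁻ p0, W p0 ∂(expMeasure l0) = R := expMeasure_laplace hl0 (by positivity)
  set C : Fin m → ℝ≥0∞ := fun b =>
    ENNReal.ofReal (Real.exp (-(li * c b))) * ENNReal.ofReal Qr
      * (1 / (m : ℝ≥0∞)) * (1 / (m : ℝ≥0∞))
    with hCdef
  have hofm : ENNReal.ofReal (1 / (m:ℝ)) = 1 / (m : ℝ≥0∞) := by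
    rw [ENNReal.ofReal_div_of_pos hm0, ENNReal.ofReal_one, ENNReal.ofReal_natCast]
  have hpt : ∀ (p0 : ℝ) (s0 : Fin m),
      ENNReal.ofReal ((∑ b : Fin m,
          Real.exp (-(li * (c b + if b = s0 then θ * p0 else 0))) / m) * Qr)
        * (1 / (m : ℝ≥0∞))
      = ∑ b : Fin m, C b * (if b = s0 then W p0 else 1) := by
    intro p0 s0
    have h1 : (∑ b : Fin m,
          Real.exp (-(li * (c b + if b = s0 then θ * p0 else 0))) / m) * Qr
        = ∑ b : Fin m, (Real.exp (-(li * c b)) * Qr) *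
            ((1 / (m:ℝ)) * (if b = s0 then Real.exp (-(θ * li * p0)) else 1)) := by
      rw [Finset.sum_mul]
      refine Finset.sum_congr rfl fun b _ => ?_
      by_cases hb : b = s0
      · simp only [if_pos hb]
        have he : Real.exp (-(li * (c b + θ * p0)))
            = Real.exp (-(li * c b)) * Real.exp (-(θ * li * p0)) := by
          rw [← Real.exp_add]; ring_nf
        rw [he]; ring
      · simp only [if_neg hb, add_zero]; ring
    rw [h1, ENNReal.ofReal_sum_of_nonneg (fun b _ => by positivity), Finset.sum_mul]
    refine Finset.sum_congr rfl fun b _ => ?_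
    rw [ENNReal.ofReal_mul (by positivity), ENNReal.ofReal_mul (by positivity),
      ENNReal.ofReal_mul (show (0:ℝ) ≤ 1 / m by positivity), hofm]
    by_cases hb : b = s0
    · simp only [if_pos hb, hCdef, hWdef]; ring
    · simp only [if_neg hb, ENNReal.ofReal_one, hCdef]; ring
  have hmeas_term : ∀ (b s0 : Fin m),
      Measurable (fun p0 : ℝ => C b * (if b = s0 then W p0 else 1)) := by
    intro b s0
    by_cases hb : b = s0
    · simp only [if_pos hb]; exact hWmeas.const_mul _
    · simp only [if_neg hb]; exact measurable_const
  calc ∫⁻ p0, (∑ s0 : Fin m, ENNReal.ofReal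
        ((∑ b : Fin m, Real.exp (-(li * (c b + if b = s0 then θ * p0 else 0))) / m) * Qr)
        * (1 / (m : ℝ≥0∞))) ∂(expMeasure l0)
      = ∫⁻ p0, (∑ s0 : Fin m, ∑ b : Fin m, C b * (if b = s0 then W p0 else 1))
          ∂(expMeasure l0) := by
        exact lintegral_congr fun p0 => Finset.sum_congr rfl fun s0 _ => hpt p0 s0
    _ = ∑ s0 : Fin m, ∑ b : Fin m,
          ∫⁻ p0, C b * (if b = s0 then W p0 else 1) ∂(expMeasure l0) := by
        rw [lintegral_finset_sum _ (fun s0 _ =>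
          Finset.measurable_sum _ (fun b _ => hmeas_term b s0))]
        exact Finset.sum_congr rfl fun s0 _ =>
          lintegral_finset_sum _ (fun b _ => hmeas_term b s0)
    _ = ∑ s0 : Fin m, ∑ b : Fin m, C b * (if b = s0 then R else 1) := by
        refine Finset.sum_congr rfl fun s0 _ => Finset.sum_congr rfl fun b _ => ?_
        by_cases hb : b = s0
        · simp only [if_pos hb]
          rw [lintegral_const_mul _ hWmeas, hWint]
        · simp only [if_neg hb, mul_one]
          rw [lintegral_const, measure_univ, mul_one]
    _ = ∑ b : Fin m, C b * (R + ((m - 1 : ℕ) : ℝ≥0∞)) := by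
        rw [Finset.sum_comm]
        refine Finset.sum_congr rfl fun b _ => ?_
        rw [← Finset.mul_sum]
        congr 1
        rw [← Finset.add_sum_erase _ _ (Finset.mem_univ b), if_pos rfl]
        congr 1
        rw [Finset.sum_congr rfl (fun s0 hs0 => if_neg
          (fun h => (Finset.mem_erase.mp hs0).1 h.symm)), Finset.sum_const,
          Finset.card_erase_of_mem (Finset.mem_univ b), Finset.card_univ,
          Fintype.card_fin, nsmul_eq_mul, mul_one]
    _ = ENNReal.ofReal ((∑ b : Fin m, Real.exp (-(li * c b)) / m) *
          ((1 - (1 / (m:ℝ)) * (θ * li / (l0 + θ * li))) * Qr)) := by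
        have hq0 : 0 ≤ 1 - (1 / (m:ℝ)) * (θ * li / (l0 + θ * li)) := by
          have h1 : θ * li / (l0 + θ * li) ≤ 1 := by
            rw [div_le_one hl0']; linarith
          have h2 : (1 / (m:ℝ)) ≤ 1 := by
            rw [div_le_one hm0]; exact_mod_cast hm
          have h3 : (1 / (m:ℝ)) * (θ * li / (l0 + θ * li)) ≤ 1 :=
            mul_le_one₀ h2 (by positivity) h1
          linarith
        have hkey : ENNReal.ofReal (1 - (1 / (m:ℝ)) * (θ * li / (l0 + θ * li)))
            = (R + ((m - 1 : ℕ) : ℝ≥0∞)) * (1 / (m : ℝ≥0∞)) := by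
          have hreal : 1 - (1 / (m:ℝ)) * (θ * li / (l0 + θ * li))
              = (l0 / (l0 + θ * li) + ((m - 1 : ℕ) : ℝ)) * (1 / (m:ℝ)) := by
            rw [Nat.cast_sub hm, Nat.cast_one]
            field_simp
            ring
          rw [hreal, ENNReal.ofReal_mul (by positivity),
            ENNReal.ofReal_add (by positivity) (by positivity), hofm,
            ENNReal.ofReal_natCast, hRdef]
        have hrhs : (∑ b : Fin m, Real.exp (-(li * c b)) / m) *
              ((1 - (1 / (m:ℝ)) * (θ * li / (l0 + θ * li))) * Qr)
            = ∑ b : Fin m, (Real.exp (-(li * c b)) * Qr) *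
              ((1 / (m:ℝ)) * (1 - (1 / (m:ℝ)) * (θ * li / (l0 + θ * li)))) := by
          rw [Finset.sum_mul]
          exact Finset.sum_congr rfl fun b _ => by ring
        rw [hrhs, ENNReal.ofReal_sum_of_nonneg (fun b _ => by positivity)]
        refine Finset.sum_congr rfl fun b _ => ?_
        rw [ENNReal.ofReal_mul (by positivity), ENNReal.ofReal_mul (by positivity),
          ENNReal.ofReal_mul (show (0:ℝ) ≤ 1 / m by positivity), hofm, hkey, hCdef]
        ring


/-- Under Rayleigh fading (`P ν` = exponential fading power of link `ν → j` with rate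
`lam ν`, all mutually independent and independent of the independent uniform slot
variables `S ν` on `{1,...,m}`), the full-duplex success probability satisfies
`E[X_{ij}] = Pr(P i/(N + Σ_{ν≠i,j} δ_{S i, S ν} P ν) ≥ θ)
           = e^{-lam i · θ · N} · Π_{ν≠i,j} (1 - (1/m)·θ/(θ + lam ν/lam i))`.
Mutual independence of all fading and slot variables is encoded by mutual
independence of the pairs `(P ν, S ν)` across `ν` together with independence of
`P ν` and `S ν` for each `ν`. -/
theorem stmt8 {Ω : Type*} [MeasurableSpace Ω] (Pr : Measure Ω) [IsProbabilityMeasure Pr]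
    (n m : ℕ) (hn : 3 ≤ n) (hm : 1 ≤ m)
    (N θ : ℝ) (hN : 0 < N) (hθ : 0 < θ)
    (i j : Fin n) (hij : i ≠ j)
    (P : Fin n → Ω → ℝ) (lam : Fin n → ℝ) (hlam : ∀ ν, 0 < lam ν)
    (S : Fin n → Ω → Fin m)
    (hPmeas : ∀ ν, Measurable (P ν)) (hSmeas : ∀ ν, Measurable (S ν))
    (hPdist : ∀ ν, Pr.map (P ν) = expMeasure (lam ν))
    (hSunif : ∀ ν b, Pr {ω | S ν ω = b} = 1 / (m : ℝ≥0∞))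
    (hindep : iIndepFun (fun ν ω => (P ν ω, S ν ω)) Pr)
    (hindepPS : ∀ ν, IndepFun (P ν) (S ν) Pr) :
    Pr {ω | θ ≤ P i ω /
        (N + ∑ ν ∈ Finset.univ \ {i, j}, if S i ω = S ν ω then P ν ω else 0)} =
      ENNReal.ofReal (Real.exp (-(lam i * θ * N)) *
        ∏ ν ∈ Finset.univ \ {i, j},
          (1 - (1 / (m : ℝ)) * (θ / (θ + lam ν / lam i)))) := by
  classical
  have hm0 : (0:ℝ) < m := by exact_mod_cast hm
  haveI : NeZero m := ⟨by omega⟩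
  have hpairmeas : ∀ ν, Measurable (fun ω => (P ν ω, S ν ω)) :=
    fun ν => (hPmeas ν).prodMk (hSmeas ν)
  haveI hSprob : ∀ ν : Fin n, IsProbabilityMeasure (Pr.map (S ν)) :=
    fun ν => Measure.isProbabilityMeasure_map (hSmeas ν).aemeasurable
  have hmapS : ∀ (ν : Fin n) (b : Fin m), (Pr.map (S ν)) {b} = 1 / (m : ℝ≥0∞) := by
    intro ν b
    rw [Measure.map_apply (hSmeas ν) (measurableSet_singleton b)]
    exact hSunif ν b
  have hlawpair : ∀ ν : Fin n,
      Pr.map (fun ω => (P ν ω, S ν ω)) = (expMeasure (lam ν)).prod (Pr.map (S ν)) := by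
    intro ν
    rw [(indepFun_iff_map_prod_eq_prod_map_map (hPmeas ν).aemeasurable
      (hSmeas ν).aemeasurable).mp (hindepPS ν), hPdist ν]
  -- the key generalized lemma
  have key : ∀ (T : Finset (Fin n)), i ∉ T → ∀ c : Fin m → ℝ, (∀ b, 0 ≤ c b) →
      Pr {ω | c (S i ω) + ∑ ν ∈ T, (if S i ω = S ν ω then θ * P ν ω else 0) ≤ P i ω}
        = ENNReal.ofReal ((∑ b : Fin m, Real.exp (-(lam i * c b)) / m) *
            ∏ ν ∈ T, (1 - (1 / (m:ℝ)) * (θ * lam i / (lam ν + θ * lam i)))) := by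
    intro T
    induction T using Finset.induction_on with
    | empty =>
        intro _ c hc
        simp only [Finset.sum_empty, add_zero, Finset.prod_empty, mul_one]
        have hA0 : MeasurableSet {x : ℝ × Fin m | c x.2 ≤ x.1} :=
          measurableSet_le ((measurable_of_finite c).comp measurable_snd) measurable_fst
        have hE : {ω | c (S i ω) ≤ P i ω}
            = (fun ω => (P i ω, S i ω)) ⁻¹' {x : ℝ × Fin m | c x.2 ≤ x.1} := rfl
        haveI := isProbabilityMeasure_expMeasure (hlam i)
        rw [hE, ← Measure.map_apply (hpairmeas i) hA0, hlawpair i,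
          Measure.prod_apply_symm hA0, lintegral_fintype,
          ENNReal.ofReal_sum_of_nonneg (fun b _ => by positivity)]
        refine Finset.sum_congr rfl fun b _ => ?_
        have hpre : ((fun x => (x, b)) ⁻¹' {x : ℝ × Fin m | c x.2 ≤ x.1}) = {p : ℝ | c b ≤ p} := rfl
        rw [hpre, expMeasure_survival (hlam i) (hc b), hmapS i b,
          ENNReal.ofReal_div_of_pos hm0, ENNReal.ofReal_natCast, one_div, div_eq_mul_inv]
    | @insert ν0 T' hν0 IH =>
        intro hiT c hc
        have hi1 : i ≠ ν0 := fun h => hiT (h ▸ Finset.mem_insert_self ν0 T')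
        have hi2 : i ∉ T' := fun h => hiT (Finset.mem_insert_of_mem h)
        have hli := hlam i
        have hl0 := hlam ν0
        haveI := isProbabilityMeasure_expMeasure (hlam ν0)
        set Qr : ℝ :=
          ∏ ν ∈ T', (1 - (1 / (m:ℝ)) * (θ * lam i / (lam ν + θ * lam i))) with hQrdef
        have hQr : 0 ≤ Qr := by
          refine Finset.prod_nonneg fun ν _ => ?_
          have hlν := hlam ν
          have h1 : θ * lam i / (lam ν + θ * lam i) ≤ 1 := by
            rw [div_le_one (by positivity)]; linarith
          have h2 : (1 / (m:ℝ)) ≤ 1 := by rw [div_le_one hm0]; exact_mod_cast hm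
          have h3 : (1 / (m:ℝ)) * (θ * lam i / (lam ν + θ * lam i)) ≤ 1 :=
            mul_le_one₀ h2 (by positivity) h1
          linarith
        set X : Ω → ℝ × Fin m := fun ω => (P ν0 ω, S ν0 ω) with hXdef
        set Y : Ω → (ℝ × Fin m) × ({x // x ∈ T'} → ℝ × Fin m) :=
          fun ω => ((P i ω, S i ω), fun ν : {x // x ∈ T'} => (P ν ω, S ν ω)) with hYdef
        have hmX : Measurable X := hpairmeas ν0
        have hmY : Measurable Y :=
          (hpairmeas i).prodMk (measurable_pi_lambda _ fun ν => hpairmeas ν)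
        haveI : IsProbabilityMeasure (Pr.map Y) := Measure.isProbabilityMeasure_map hmY.aemeasurable
        have hXY : IndepFun X Y Pr := by
          have hdisj : Disjoint ({ν0} : Finset (Fin n)) (insert i T') := by
            simp only [Finset.disjoint_singleton_left, Finset.mem_insert]
            push_neg
            exact ⟨hi1.symm, hν0⟩
          have h1 := hindep.indepFun_finset {ν0} (insert i T') hdisj hpairmeas
          have hφ : Measurable fun v : ({x // x ∈ ({ν0} : Finset (Fin n))} → ℝ × Fin m) =>
              v ⟨ν0, Finset.mem_singleton_self ν0⟩ := measurable_pi_apply _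
          have hψ : Measurable fun v : ({x // x ∈ (insert i T' : Finset (Fin n))} → ℝ × Fin m) =>
              (v ⟨i, Finset.mem_insert_self i T'⟩,
               fun ν : {x // x ∈ T'} => v ⟨ν.1, Finset.mem_insert_of_mem ν.2⟩) :=
            (measurable_pi_apply _).prodMk
              (measurable_pi_lambda _ fun ν => measurable_pi_apply _)
          exact h1.comp hφ hψ
        set A : Set ((ℝ × Fin m) × ((ℝ × Fin m) × ({x // x ∈ T'} → ℝ × Fin m))) :=
          {z | c z.2.1.2 + ((if z.2.1.2 = z.1.2 then θ * z.1.1 else 0) +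
              ∑ ν : {x // x ∈ T'}, (if z.2.1.2 = (z.2.2 ν).2 then θ * (z.2.2 ν).1 else 0))
            ≤ z.2.1.1} with hAdef
        have hA : MeasurableSet A := by
          apply measurableSet_le
          · refine Measurable.add ?_ (Measurable.add ?_ ?_)
            · exact (measurable_of_finite c).comp (measurable_snd.fst.snd)
            · refine Measurable.ite ?_ (measurable_fst.fst.const_mul θ) measurable_const
              exact ((measurable_snd.fst.snd).prodMk (measurable_fst.snd))
                (Set.to_countable {q : Fin m × Fin m | q.1 = q.2}).measurableSet
            · refine Finset.measurable_sum _ fun ν _ => ?_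
              refine Measurable.ite ?_
                (((measurable_pi_apply ν).comp measurable_snd.snd).fst.const_mul θ)
                measurable_const
              exact ((measurable_snd.fst.snd).prodMk
                  (((measurable_pi_apply ν).comp measurable_snd.snd).snd))
                (Set.to_countable {q : Fin m × Fin m | q.1 = q.2}).measurableSet
          · exact measurable_snd.fst.fst
        have hE : {ω | c (S i ω) + ∑ ν ∈ insert ν0 T',
              (if S i ω = S ν ω then θ * P ν ω else 0) ≤ P i ω}
            = (fun ω => (X ω, Y ω)) ⁻¹' A := by
          ext ω
          simp only [Set.mem_setOf_eq, Set.mem_preimage, hAdef, hXdef, hYdef]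
          rw [Finset.sum_insert hν0, ← Finset.sum_coe_sort T'
            (fun ν => if S i ω = S ν ω then θ * P ν ω else 0), ← add_assoc]
        have hslice : ∀ p0 : ℝ, 0 ≤ p0 → ∀ s0 : Fin m,
            Pr.map Y (Prod.mk (p0, s0) ⁻¹' A)
            = ENNReal.ofReal ((∑ b : Fin m,
                Real.exp (-(lam i * (c b + if b = s0 then θ * p0 else 0))) / m) * Qr) := by
          intro p0 hp0 s0
          rw [Measure.map_apply hmY (hA.preimage measurable_prodMk_left)]
          have hYpre : Y ⁻¹' (Prod.mk (p0, s0) ⁻¹' A)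
              = {ω | c (S i ω) + (if S i ω = s0 then θ * p0 else 0)
                  + ∑ ν ∈ T', (if S i ω = S ν ω then θ * P ν ω else 0) ≤ P i ω} := by
            ext ω
            simp only [Set.mem_preimage, hAdef, hYdef, Set.mem_setOf_eq]
            rw [← Finset.sum_coe_sort T'
              (fun ν => if S i ω = S ν ω then θ * P ν ω else 0), ← add_assoc]
          have hIH := IH hi2 (fun b => c b + if b = s0 then θ * p0 else 0)
            (fun b => add_nonneg (hc b)
              (by by_cases hb : b = s0 <;> simp [hb] <;> positivity))
          rw [hYpre, hIH]
        rw [hE, ← Measure.map_apply (hmX.prodMk hmY) hA,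
          (indepFun_iff_map_prod_eq_prod_map_map hmX.aemeasurable hmY.aemeasurable).mp hXY,
          Measure.prod_apply hA,
          show Pr.map X = (expMeasure (lam ν0)).prod (Pr.map (S ν0)) from hlawpair ν0,
          MeasureTheory.lintegral_prod _ (measurable_measure_prodMk_left hA).aemeasurable]
        have hae : (fun p0 => ∫⁻ s0, Pr.map Y (Prod.mk (p0, s0) ⁻¹' A) ∂(Pr.map (S ν0)))
            =ᵐ[expMeasure (lam ν0)] (fun p0 => ∑ s0 : Fin m, ENNReal.ofReal
              ((∑ b : Fin m,
                Real.exp (-(lam i * (c b + if b = s0 then θ * p0 else 0))) / m) * Qr)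
              * (1 / (m:ℝ≥0∞))) := by
          filter_upwards [expMeasure_ae_nonneg] with p0 hp0
          rw [lintegral_fintype]
          exact Finset.sum_congr rfl fun s0 _ => by rw [hslice p0 hp0 s0, hmapS]
        rw [lintegral_congr_ae hae,
          step_integral m hm θ (lam i) (lam ν0) Qr hθ hli hl0 hQr c,
          Finset.prod_insert hν0]
  -- now reduce the original statement to `key`
  have hT : i ∉ Finset.univ \ ({i, j} : Finset (Fin n)) := by
    simp [Finset.mem_sdiff]
  have hPae : ∀ᵐ ω ∂Pr, ∀ ν : Fin n, 0 ≤ P ν ω := by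
    rw [ae_all_iff]
    intro ν
    rw [ae_iff]
    have hset : {ω | ¬ 0 ≤ P ν ω} = P ν ⁻¹' Set.Iio 0 := by
      ext ω; simp [not_le]
    rw [hset, ← Measure.map_apply (hPmeas ν) measurableSet_Iio, hPdist ν,
      expMeasure_apply' measurableSet_Iio]
    exact lintegral_exponentialPDF_of_nonpos le_rfl
  have hsetae : {ω | θ ≤ P i ω /
        (N + ∑ ν ∈ Finset.univ \ {i, j}, if S i ω = S ν ω then P ν ω else 0)}
      =ᵐ[Pr] {ω | (fun _ : Fin m => θ * N) (S i ω) + ∑ ν ∈ Finset.univ \ {i, j},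
          (if S i ω = S ν ω then θ * P ν ω else 0) ≤ P i ω} := by
    rw [Filter.eventuallyEq_set]
    filter_upwards [hPae] with ω hω
    have hI : 0 ≤ ∑ ν ∈ Finset.univ \ {i, j}, (if S i ω = S ν ω then P ν ω else 0) :=
      Finset.sum_nonneg fun ν _ => by
        split_ifs with h
        · exact hω ν
        · exact le_rfl
    have hpos : 0 < N + ∑ ν ∈ Finset.univ \ {i, j},
        (if S i ω = S ν ω then P ν ω else 0) := by linarith
    rw [le_div_iff₀ hpos, mul_add, Finset.mul_sum]
    simp only [mul_ite, mul_zero]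
  rw [measure_congr hsetae, key _ hT (fun _ => θ * N) (fun _ => by positivity)]
  have hliv := hlam i
  congr 1
  congr 1
  · rw [Finset.sum_const, Finset.card_univ, Fintype.card_fin, nsmul_eq_mul]
    field_simp
  · refine Finset.prod_congr rfl fun ν _ => ?_
    have hlν := hlam ν
    have hfac : θ * lam i / (lam ν + θ * lam i) = θ / (θ + lam ν / lam i) := by
      rw [div_eq_div_iff (by positivity) (by positivity)]
      field_simp
      ring
    rw [hfac]
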